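/- Let X be a smooth manifold or nonsingular variety with de Rham complex (Ω•, d), and let A = Sym_{Ω•}(Der(Ω•)[1]) with differential d_S = [d, ·] (the graded commutator with the de Rham differential acting on the symmetric algebra of shifted derivations as a Hamiltonian vector field). Suppose locally Der(Ω•) is a free Ω•-module with basis the contractions ι_j and Lie derivatives L_j = [d, ι_j] for commuting vector fields ∂_j trivializing the tangent bundle. Then the Ω•-linear derivation h of A with h(L_j) = ι_j, h(ι_j) = 0 satisfies d_S∘h + h∘d_S = m·id on Symᵐ_{Ω•}(Der(Ω•)[1]); hence H := ⊕_{m>0} (1/m)h is a contracting homotopy showing that the inclusion Ω• → A of scalars is a quasi-isomorphism. -/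

import Mathlib

set_option maxHeartbeats 1000000
set_option synthInstance.maxHeartbeats 400000


/-- Let `A = Sym_{Ω•}(Der(Ω•)[1])` with differential `d_S = [d, ·]`,
where locally `Der(Ω•)` is a free `Ω•`-module on contractions `ι_j` and Lie derivatives
`L_j = [d, ι_j]`.  The `Ω•`-linear derivation `h` with `h(L_j) = ι_j`, `h(ι_j) = 0`
satisfies `d_S ∘ h + h ∘ d_S = m·id` on `Symᵐ`, hence yields a contracting homotopy
showing that the inclusion of scalars `Ω• → A` is a quasi-isomorphism. -/
theorem deRham_BV_contraction {k A : Type*} [Field k] [CharZero k]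
    [Ring A] [Algebra k A]
    (grade : ℤ → Submodule k A) (Sym : ℕ → Submodule k A)
    (hSym_internal : DirectSum.IsInternal Sym)
    (hgrade_internal : DirectSum.IsInternal grade)
    (hone : (1 : A) ∈ Sym 0)
    (hSym_mul : ∀ {m n : ℕ} {x y : A}, x ∈ Sym m → y ∈ Sym n → x * y ∈ Sym (m + n))
    (hgrade_mul : ∀ {i j : ℤ} {x y : A}, x ∈ grade i → y ∈ grade j → x * y ∈ grade (i + j))
    -- each Sym-component is spanned by grade-homogeneous elements
    (hcompat : ∀ m : ℕ, (Sym m : Set A) ⊆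
      (Submodule.span k {x : A | x ∈ Sym m ∧ ∃ i : ℤ, x ∈ grade i} : Set A))
    (n : ℕ) (iota L : Fin n → A)
    (hiota_sym : ∀ j, iota j ∈ Sym 1) (hL_sym : ∀ j, L j ∈ Sym 1)
    (hiota_deg : ∀ j, iota j ∈ grade (-2)) (hL_deg : ∀ j, L j ∈ grade (-1))
    -- Der(Ω•)[1] is freely generated over Ω• = Sym⁰ by the ι_j and L_j
    (hgen : ∀ x ∈ Sym 1, ∃ a b : Fin n → A,
      (∀ j, a j ∈ Sym 0 ∧ b j ∈ Sym 0) ∧ x = ∑ j, (a j * iota j + b j * L j))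
    (hSym_gen : ∀ m : ℕ, (Sym (m + 1) : Set A) ⊆
      (Submodule.span k {z : A | ∃ x ∈ Sym 1, ∃ y ∈ Sym m, z = x * y} : Set A))
    (dS h : A →ₗ[k] A)
    (hdS_deg : ∀ (i : ℤ), ∀ x ∈ grade i, dS x ∈ grade (i + 1))
    (hh_deg : ∀ (i : ℤ), ∀ x ∈ grade i, h x ∈ grade (i - 1))
    (hdS_sym : ∀ (m : ℕ), ∀ x ∈ Sym m, dS x ∈ Sym m)
    (hh_sym : ∀ (m : ℕ), ∀ x ∈ Sym m, h x ∈ Sym m)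
    (hdS_leib : ∀ (i : ℤ) (x y : A), x ∈ grade i →
      dS (x * y) = dS x * y + ((-1 : k) ^ i) • (x * dS y))
    (hh_leib : ∀ (i : ℤ) (x y : A), x ∈ grade i →
      h (x * y) = h x * y + ((-1 : k) ^ i) • (x * h y))
    (hh_L : ∀ j, h (L j) = iota j) (hh_iota : ∀ j, h (iota j) = 0)
    (hh_sym0 : ∀ x ∈ Sym 0, h x = 0)
    (hdS_iota : ∀ j, dS (iota j) = L j) (hdS_L : ∀ j, dS (L j) = 0)
    (hdd : ∀ x : A, dS (dS x) = 0) :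
    -- the homotopy identity on Symᵐ
    (∀ m : ℕ, ∀ x ∈ Sym m, dS (h x) + h (dS x) = (m : k) • x) ∧
    -- the inclusion Ω• = Sym⁰ → A is a quasi-isomorphism
    (∀ x : A, dS x = 0 → ∃ ω ∈ Sym 0, ∃ y : A, x = ω + dS y) ∧
    (∀ ω ∈ Sym 0, (∃ y : A, ω = dS y) → ∃ η ∈ Sym 0, ω = dS η) := by
  classical
  set P : A →ₗ[k] A := dS ∘ₗ h + h ∘ₗ dS with hPdef
  have hP : ∀ x : A, P x = dS (h x) + h (dS x) := fun x => rfl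
  have hm1 : ((-1 : k)) ≠ 0 := by norm_num
  have hneg : ∀ i : ℤ, ((-1 : k) ^ (i - 1)) = -((-1 : k) ^ i) := by
    intro i
    rw [zpow_sub₀ hm1, zpow_one]
    field_simp
  have hneg' : ∀ i : ℤ, ((-1 : k) ^ (i + 1)) = -((-1 : k) ^ i) := by
    intro i
    rw [zpow_add₀ hm1, zpow_one, mul_neg_one]
  have hsq : ∀ i : ℤ, ((-1 : k) ^ i) * ((-1 : k) ^ i) = 1 := by
    intro i
    rw [← mul_zpow]
    norm_num
  -- key Leibniz-type formula for P
  have key : ∀ (i : ℤ) (x : A), x ∈ grade i → ∀ y : A,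
      P (x * y) = P x * y + x * P y := by
    intro i x hx y
    simp only [hP]
    rw [hh_leib i x y hx, hdS_leib i x y hx, map_add, map_add, map_smul, map_smul,
        hdS_leib (i - 1) (h x) y (hh_deg i x hx),
        hh_leib (i + 1) (dS x) y (hdS_deg i x hx),
        hdS_leib i x (h y) hx, hh_leib i x (dS y) hx, hneg, hneg']
    simp only [smul_add, smul_smul, hsq, one_smul, neg_smul, add_mul, mul_add]
    abel
  have P0 : ∀ a ∈ Sym 0, P a = 0 := by
    intro a ha
    rw [hP, hh_sym0 a ha, map_zero, hh_sym0 _ (hdS_sym 0 a ha), add_zero]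
  have keySym0 : ∀ (y : A), ∀ a ∈ Sym 0, P (a * y) = a * P y := by
    intro y a ha
    refine Submodule.span_induction ?_ ?_ ?_ ?_ (hcompat 0 ha)
    · rintro b ⟨hb0, i, hbi⟩
      rw [key i b hbi y, P0 b hb0, zero_mul, zero_add]
    · simp
    · intro u v _ _ hu hv
      simp only [add_mul, map_add]
      rw [hu, hv]
    · intro r b _ hb
      simp only [smul_mul_assoc, map_smul]
      rw [hb]
  -- the homotopy identity, via P
  have main : ∀ m : ℕ, ∀ x ∈ Sym m, P x = (m : k) • x := by
    intro m
    induction m with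
    | zero =>
      intro x hx
      rw [P0 x hx]
      simp
    | succ m ih =>
      intro x hx
      have hι : ∀ (j : Fin n) (y : A), y ∈ Sym m →
          P (iota j * y) = ((m + 1 : ℕ) : k) • (iota j * y) := by
        intro j y hy
        rw [key (-2) (iota j) (hiota_deg j) y, hP, hh_iota, map_zero, hdS_iota, hh_L,
            zero_add, ih y hy, mul_smul_comm]
        push_cast
        rw [add_smul, one_smul, add_comm]
      have hLc : ∀ (j : Fin n) (y : A), y ∈ Sym m →
          P (L j * y) = ((m + 1 : ℕ) : k) • (L j * y) := by
        intro j y hy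
        rw [key (-1) (L j) (hL_deg j) y, hP, hh_L, hdS_iota, hdS_L, map_zero, add_zero,
            ih y hy, mul_smul_comm]
        push_cast
        rw [add_smul, one_smul, add_comm]
      refine Submodule.span_induction ?_ ?_ ?_ ?_ (hSym_gen m hx)
      · rintro z ⟨x₁, hx₁, y, hy, rfl⟩
        obtain ⟨a, b, hab, rfl⟩ := hgen x₁ hx₁
        rw [Finset.sum_mul]
        simp only [add_mul, mul_assoc]
        rw [map_sum, Finset.smul_sum]
        refine Finset.sum_congr rfl fun j _ => ?_
        rw [map_add, keySym0 (iota j * y) (a j) (hab j).1,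
            keySym0 (L j * y) (b j) (hab j).2, hι j y hy, hLc j y hy,
            mul_smul_comm, mul_smul_comm, smul_add]
      · simp
      · intro u v _ _ hu hv
        rw [map_add, hu, hv, smul_add]
      · intro r u _ hu
        rw [map_smul, hu, smul_comm]
  -- componentwise dS
  set Dmap : ∀ m : ℕ, Sym m → Sym m := fun m v => ⟨dS v, hdS_sym m v v.2⟩ with hDdef
  have hD0 : ∀ m : ℕ, Dmap m 0 = 0 := by
    intro m
    apply Subtype.ext
    simp [hDdef]
  have coe_sum : ∀ c : DirectSum ℕ fun m => ↥(Sym m),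
      (DirectSum.coeAddMonoidHom Sym) c = ∑ m ∈ c.support, ((c m : A)) := by
    intro c
    rw [DirectSum.coeAddMonoidHom_eq_dfinsuppSum]
    rfl
  have coe_mapD : ∀ c : DirectSum ℕ fun m => ↥(Sym m),
      (DirectSum.coeAddMonoidHom Sym) (DFinsupp.mapRange Dmap hD0 c)
        = dS ((DirectSum.coeAddMonoidHom Sym) c) := by
    intro c
    rw [DirectSum.coeAddMonoidHom_eq_dfinsuppSum,
        DFinsupp.sum_mapRange_index (by intro i; simp [hD0])]
    rw [coe_sum c, map_sum]
    rfl
  refine ⟨fun m x hx => main m x hx, ?_, ?_⟩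
  · intro x hdx
    obtain ⟨c, hc⟩ := hSym_internal.surjective x
    have hc0 : (DirectSum.coeAddMonoidHom Sym) (DFinsupp.mapRange Dmap hD0 c)
        = (DirectSum.coeAddMonoidHom Sym) 0 := by
      rw [coe_mapD c, hc, hdx, map_zero]
    have hczero : DFinsupp.mapRange Dmap hD0 c = 0 := hSym_internal.injective hc0
    have hcomp : ∀ m : ℕ, dS ((c m : A)) = 0 := by
      intro m
      have := congrFun (congrArg DFunLike.coe hczero) m
      rw [DFinsupp.mapRange_apply] at this
      exact congrArg Subtype.val this
    have hxsum : x = ∑ m ∈ c.support, ((c m : A)) := by rw [← hc, coe_sum c]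
    refine ⟨(c 0 : A), (c 0).2, ∑ m ∈ c.support, (m : k)⁻¹ • h ((c m : A)), ?_⟩
    rw [map_sum]
    have hterm : ∀ m ∈ c.support, dS ((m : k)⁻¹ • h ((c m : A)))
        = (if m = 0 then 0 else ((c m : A))) := by
      intro m _
      have h1 : dS (h ((c m : A))) = (m : k) • ((c m : A)) := by
        have h2 := main m _ (c m).2
        rw [hP] at h2
        rwa [hcomp m, map_zero, add_zero] at h2
      rw [map_smul, h1, smul_smul]
      by_cases hm : m = 0
      · subst hm; simp
      · rw [inv_mul_cancel₀ (Nat.cast_ne_zero.mpr hm), one_smul, if_neg hm]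
    rw [Finset.sum_congr rfl hterm]
    have h0case : (if (0 : ℕ) ∈ c.support then ((c 0 : A)) else 0) = (c 0 : A) := by
      by_cases h0 : (0 : ℕ) ∈ c.support
      · rw [if_pos h0]
      · rw [if_neg h0, DFinsupp.notMem_support_iff.mp h0]
        rfl
    have hsplit : (∑ m ∈ c.support, ((c m : A)))
        = (c 0 : A) + ∑ m ∈ c.support, (if m = 0 then 0 else ((c m : A))) := by
      rw [← h0case, ← Finset.sum_ite_eq' c.support 0 (fun m => ((c m : A))),
          ← Finset.sum_add_distrib]
      refine Finset.sum_congr rfl fun m _ => ?_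
      by_cases hm : m = 0 <;> simp [hm]
    rw [hxsum]
    exact hsplit
  · rintro ω hω ⟨y, hy⟩
    obtain ⟨c, hc⟩ := hSym_internal.surjective y
    have hc1 : (DirectSum.coeAddMonoidHom Sym) (DFinsupp.mapRange Dmap hD0 c)
        = (DirectSum.coeAddMonoidHom Sym)
            (DirectSum.of (fun m => Sym m) 0 ⟨ω, hω⟩) := by
      rw [coe_mapD c, hc, DirectSum.coeAddMonoidHom_of, ← hy]
    have heq := hSym_internal.injective hc1
    have := congrFun (congrArg DFunLike.coe heq) 0
    rw [DFinsupp.mapRange_apply, DirectSum.of_eq_same] at this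
    have hval : dS ((c 0 : A)) = ω := congrArg Subtype.val this
    exact ⟨(c 0 : A), (c 0).2, hval.symm⟩
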